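/- For every integer w ≥ 1 and all indices 1 ≤ i ≤ j ≤ n−1, the optimal splitting points are monotone: R(i,j,w) ≤ R(i,j+1,w) ≤ R(i+1,j+1,w). -/

import Mathlib

open scoped ENNReal NNReal BigOperators

namespace KnuthYaoAux

/-- Quadrangle equality for interval sums. -/
lemma sumQE (p : ℕ → ℝ≥0) {a b c d : ℕ} (h1 : 1 ≤ a) (hab : a ≤ b) (hbc : b ≤ c)
    (hcd : c ≤ d) :
    (∑ k ∈ Finset.Icc a c, (p k : ℝ≥0∞)) + ∑ k ∈ Finset.Icc b d, (p k : ℝ≥0∞)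
      = (∑ k ∈ Finset.Icc a d, (p k : ℝ≥0∞)) + ∑ k ∈ Finset.Icc b c, (p k : ℝ≥0∞) := by
  obtain ⟨a', rfl⟩ : ∃ a', a = a' + 1 := ⟨a - 1, by omega⟩
  obtain ⟨b', rfl⟩ : ∃ b', b = b' + 1 := ⟨b - 1, by omega⟩
  rw [Finset.Icc_add_one_left_eq_Ioc, Finset.Icc_add_one_left_eq_Ioc, Finset.Icc_add_one_left_eq_Ioc, Finset.Icc_add_one_left_eq_Ioc]
  have h1 : a' ≤ b' := by omega
  have h2 : b' ≤ c := by omega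
  rw [← Finset.sum_Ioc_consecutive (fun k => (p k : ℝ≥0∞)) h1 h2,
      ← Finset.sum_Ioc_consecutive (fun k => (p k : ℝ≥0∞)) h2 hcd,
      ← Finset.sum_Ioc_consecutive (fun k => (p k : ℝ≥0∞)) h1 (le_trans h2 hcd),
      ← Finset.sum_Ioc_consecutive (fun k => (p k : ℝ≥0∞)) h2 hcd]
  ring

lemma sumMonoR (p : ℕ → ℝ≥0) {a c d : ℕ} (hcd : c ≤ d) :
    (∑ k ∈ Finset.Icc a c, (p k : ℝ≥0∞)) ≤ ∑ k ∈ Finset.Icc a d, (p k : ℝ≥0∞) :=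
  Finset.sum_le_sum_of_subset (Finset.Icc_subset_Icc_right hcd)

lemma sumMonoL (p : ℕ → ℝ≥0) {a b d : ℕ} (hab : a ≤ b) :
    (∑ k ∈ Finset.Icc b d, (p k : ℝ≥0∞)) ≤ ∑ k ∈ Finset.Icc a d, (p k : ℝ≥0∞) :=
  Finset.sum_le_sum_of_subset (Finset.Icc_subset_Icc_left hab)

lemma sumFin (p : ℕ → ℝ≥0) (a b : ℕ) :
    (∑ k ∈ Finset.Icc a b, (p k : ℝ≥0∞)) ≠ ⊤ := by
  refine (ENNReal.sum_lt_top.2 fun k _ => ?_).ne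
  exact ENNReal.coe_lt_top

section WithC

variable {n : ℕ} {p : ℕ → ℝ≥0} {C : ℕ → ℕ → ℕ → ℝ≥0∞} {R : ℕ → ℕ → ℕ → ℕ}

/-- Candidate split upper bound. -/
lemma Cle
    (hrec : ∀ i j w : ℕ, 1 ≤ i → i < j → j ≤ n → 1 ≤ w →
      C i j w = (∑ k ∈ Finset.Icc i j, (p k : ℝ≥0∞)) +
        ⨅ k ∈ Finset.Ioc i j, (C i (k - 1) w + C k j (w - 1)))
    {i j k w : ℕ} (hi : 1 ≤ i) (hij : i < j) (hjn : j ≤ n) (hw : 1 ≤ w)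
    (hik : i < k) (hkj : k ≤ j) :
    C i j w ≤ (∑ m ∈ Finset.Icc i j, (p m : ℝ≥0∞)) + (C i (k - 1) w + C k j (w - 1)) := by
  rw [hrec i j w hi hij hjn hw]
  exact add_le_add_right (iInf₂_le k (Finset.mem_Ioc.2 ⟨hik, hkj⟩)) _

/-- The recurrence realized at the optimal split `R i j w`. -/
lemma Ceq
    (hrec : ∀ i j w : ℕ, 1 ≤ i → i < j → j ≤ n → 1 ≤ w →
      C i j w = (∑ k ∈ Finset.Icc i j, (p k : ℝ≥0∞)) +
        ⨅ k ∈ Finset.Ioc i j, (C i (k - 1) w + C k j (w - 1)))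
    (hR : ∀ i j w : ℕ, 1 ≤ i → i < j → j ≤ n → 1 ≤ w →
      i < R i j w ∧ R i j w ≤ j ∧
      (∀ k : ℕ, i < k → k ≤ j →
        C i (R i j w - 1) w + C (R i j w) j (w - 1) ≤ C i (k - 1) w + C k j (w - 1)) ∧
      (∀ k : ℕ, i < k → k ≤ j →
        C i (k - 1) w + C k j (w - 1) ≤ C i (R i j w - 1) w + C (R i j w) j (w - 1) →
        k ≤ R i j w))
    {i j w : ℕ} (hi : 1 ≤ i) (hij : i < j) (hjn : j ≤ n) (hw : 1 ≤ w) :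
    C i j w = (∑ m ∈ Finset.Icc i j, (p m : ℝ≥0∞)) +
      (C i (R i j w - 1) w + C (R i j w) j (w - 1)) := by
  obtain ⟨h1, h2, hopt, -⟩ := hR i j w hi hij hjn hw
  refine le_antisymm (Cle hrec hi hij hjn hw h1 h2) ?_
  rw [hrec i j w hi hij hjn hw]
  refine add_le_add_right (le_iInf₂ fun k hk => ?_) _
  obtain ⟨h3, h4⟩ := Finset.mem_Ioc.1 hk
  exact hopt k h3 h4

/-- Finiteness of `C i j w` for `w ≥ 1`. -/
lemma Cfin
    (hdiag : ∀ i w : ℕ, 1 ≤ i → i ≤ n → C i i w = 0)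
    (hrec : ∀ i j w : ℕ, 1 ≤ i → i < j → j ≤ n → 1 ≤ w →
      C i j w = (∑ k ∈ Finset.Icc i j, (p k : ℝ≥0∞)) +
        ⨅ k ∈ Finset.Ioc i j, (C i (k - 1) w + C k j (w - 1))) :
    ∀ s i j w : ℕ, 1 ≤ i → i ≤ j → j ≤ n → 1 ≤ w → j - i ≤ s → C i j w ≠ ⊤ := by
  intro s
  induction s with
  | zero =>
    intro i j w hi hij hjn hw hs
    have : i = j := by omega
    subst this
    rw [hdiag i w hi hjn]
    exact ENNReal.zero_ne_top
  | succ s ih =>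
    intro i j w hi hij hjn hw hs
    rcases eq_or_lt_of_le hij with h | h
    · subst h; rw [hdiag i w hi hjn]; exact ENNReal.zero_ne_top
    · have hle := Cle (p := p) hrec hi h hjn hw (k := j) h le_rfl
      rw [hdiag j (w - 1) (by omega) hjn, add_zero] at hle
      have h1 : C i (j - 1) w ≠ ⊤ := ih i (j - 1) w hi (by omega) (by omega) hw (by omega)
      exact ne_top_of_le_ne_top (by simp [ENNReal.add_ne_top, h1, sumFin]) hle

/-- Antitonicity of `C i j w` in `w`. -/
lemma Cmono
    (hdiag : ∀ i w : ℕ, 1 ≤ i → i ≤ n → C i i w = 0)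
    (hzero : ∀ i j : ℕ, 1 ≤ i → i < j → j ≤ n → C i j 0 = ⊤)
    (hrec : ∀ i j w : ℕ, 1 ≤ i → i < j → j ≤ n → 1 ≤ w →
      C i j w = (∑ k ∈ Finset.Icc i j, (p k : ℝ≥0∞)) +
        ⨅ k ∈ Finset.Ioc i j, (C i (k - 1) w + C k j (w - 1))) :
    ∀ w s i j : ℕ, 1 ≤ i → i ≤ j → j ≤ n → j - i ≤ s → C i j (w + 1) ≤ C i j w := by
  intro w
  induction w with
  | zero =>
    intro s i j hi hij hjn _
    rcases eq_or_lt_of_le hij with h | h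
    · subst h; rw [hdiag i 1 hi hjn, hdiag i 0 hi hjn]
    · rw [hzero i j hi h hjn]; exact le_top
  | succ w ihw =>
    intro s
    induction s with
    | zero =>
      intro i j hi hij hjn hs
      have : i = j := by omega
      subst this
      rw [hdiag i (w + 2) hi hjn, hdiag i (w + 1) hi hjn]
    | succ s ihs =>
      intro i j hi hij hjn hs
      rcases eq_or_lt_of_le hij with h | h
      · subst h; rw [hdiag i (w + 2) hi hjn, hdiag i (w + 1) hi hjn]
      · rw [hrec i j (w + 2) hi h hjn (by omega), hrec i j (w + 1) hi h hjn (by omega)]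
        refine add_le_add_right (le_iInf₂ fun k hk => ?_) _
        obtain ⟨hik, hkj⟩ := Finset.mem_Ioc.1 hk
        refine le_trans (iInf₂_le k hk) ?_
        have e1 : w + 2 - 1 = w + 1 := by omega
        have e2 : w + 1 - 1 = w := by omega
        rw [e1, e2]
        exact add_le_add (ihs i (k - 1) hi (by omega) (by omega) (by omega))
          (ihw j k j (by omega) hkj hjn (by omega))

/-- Quadrangle inequality for `C` at each level `w`. -/
lemma QI
    (hdiag : ∀ i w : ℕ, 1 ≤ i → i ≤ n → C i i w = 0)
    (hzero : ∀ i j : ℕ, 1 ≤ i → i < j → j ≤ n → C i j 0 = ⊤)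
    (hrec : ∀ i j w : ℕ, 1 ≤ i → i < j → j ≤ n → 1 ≤ w →
      C i j w = (∑ k ∈ Finset.Icc i j, (p k : ℝ≥0∞)) +
        ⨅ k ∈ Finset.Ioc i j, (C i (k - 1) w + C k j (w - 1)))
    (hR : ∀ i j w : ℕ, 1 ≤ i → i < j → j ≤ n → 1 ≤ w →
      i < R i j w ∧ R i j w ≤ j ∧
      (∀ k : ℕ, i < k → k ≤ j →
        C i (R i j w - 1) w + C (R i j w) j (w - 1) ≤ C i (k - 1) w + C k j (w - 1)) ∧
      (∀ k : ℕ, i < k → k ≤ j →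
        C i (k - 1) w + C k j (w - 1) ≤ C i (R i j w - 1) w + C (R i j w) j (w - 1) →
        k ≤ R i j w)) :
    ∀ w s a b c d : ℕ, 1 ≤ a → a ≤ b → b ≤ c → c ≤ d → d ≤ n → d - a ≤ s →
      C a c w + C b d w ≤ C a d w + C b c w := by
  intro w
  induction w with
  | zero =>
    intro s a b c d h1 hab hbc hcd hdn _
    rcases eq_or_lt_of_le (le_trans hab (le_trans hbc hcd)) with h | h
    · have hb : b = a := by omega
      have hc : c = a := by omega
      have hd : d = a := by omega
      rw [hb, hc, hd]
    · rw [hzero a d h1 h hdn, top_add]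
      exact le_top
  | succ w ihw =>
    intro s
    induction s with
    | zero =>
      intro a b c d h1 hab hbc hcd hdn hs
      have hb : b = a := by omega
      have hc : c = a := by omega
      have hd : d = a := by omega
      rw [hb, hc, hd]
    | succ s ihs =>
      intro a b c d h1 hab hbc hcd hdn hs
      rcases eq_or_lt_of_le hab with rfl | hab'
      · exact (add_comm _ _).le
      rcases eq_or_lt_of_le hcd with rfl | hcd'
      · exact le_rfl
      rcases eq_or_lt_of_le hbc with rfl | hbc'
      · -- triangle case: b = c
        rw [hdiag b (w + 1) (by omega) (by omega), add_zero]
        obtain ⟨hr1, hr2, hopt, -⟩ := hR a d (w + 1) h1 (by omega) hdn (by omega)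
        have e1 : C a d (w + 1) = (∑ m ∈ Finset.Icc a d, (p m : ℝ≥0∞)) +
            (C a (R a d (w + 1) - 1) (w + 1) + C (R a d (w + 1)) d w) := by
          have := Ceq (p := p) hrec hR h1 (by omega : a < d) hdn (by omega : 1 ≤ w + 1)
          rwa [Nat.add_sub_cancel] at this
        set r := R a d (w + 1) with hrdef
        by_cases hrb : r ≤ b
        · have h2 : C a b (w + 1) ≤ (∑ m ∈ Finset.Icc a b, (p m : ℝ≥0∞)) +
              (C a (r - 1) (w + 1) + C r b w) :=
            Cle (p := p) hrec h1 hab' (by omega) (by omega) hr1 hrb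
          have h3 : C b d (w + 1) ≤ C b d w :=
            Cmono hdiag hzero hrec w d b d (by omega) hcd hdn (by omega)
          have h4 : C r b w + C b d w ≤ C r d w := by
            have := ihw d r b b d (by omega) hrb le_rfl hcd hdn (by omega)
            rwa [hdiag b w (by omega) (by omega), add_zero] at this
          calc C a b (w + 1) + C b d (w + 1)
              ≤ ((∑ m ∈ Finset.Icc a b, (p m : ℝ≥0∞)) +
                  (C a (r - 1) (w + 1) + C r b w)) + C b d w := add_le_add h2 h3
            _ = ((∑ m ∈ Finset.Icc a b, (p m : ℝ≥0∞)) + C a (r - 1) (w + 1))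
                  + (C r b w + C b d w) := by ring
            _ ≤ ((∑ m ∈ Finset.Icc a d, (p m : ℝ≥0∞)) + C a (r - 1) (w + 1))
                  + C r d w := add_le_add (add_le_add (sumMonoR p hcd) le_rfl) h4
            _ = C a d (w + 1) := by rw [e1]; ring
        · push_neg at hrb
          have h2 : C a b (w + 1) + C b (r - 1) (w + 1) ≤ C a (r - 1) (w + 1) := by
            have := ihs a b b (r - 1) h1 (le_of_lt hab') le_rfl (by omega) (by omega) (by omega)
            rwa [hdiag b (w + 1) (by omega) (by omega), add_zero] at this
          have h3 : C b d (w + 1) ≤ (∑ m ∈ Finset.Icc b d, (p m : ℝ≥0∞)) +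
              (C b (r - 1) (w + 1) + C r d w) :=
            Cle (p := p) hrec (by omega) hcd' hdn (by omega) hrb hr2
          calc C a b (w + 1) + C b d (w + 1)
              ≤ C a b (w + 1) + ((∑ m ∈ Finset.Icc b d, (p m : ℝ≥0∞)) +
                  (C b (r - 1) (w + 1) + C r d w)) := add_le_add_right h3 _
            _ = (∑ m ∈ Finset.Icc b d, (p m : ℝ≥0∞)) +
                  ((C a b (w + 1) + C b (r - 1) (w + 1)) + C r d w) := by ring
            _ ≤ (∑ m ∈ Finset.Icc a d, (p m : ℝ≥0∞)) +
                  (C a (r - 1) (w + 1) + C r d w) :=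
                add_le_add (sumMonoL p (le_of_lt hab')) (add_le_add_left h2 _)
            _ = C a d (w + 1) := e1.symm
      · -- main case: a < b < c < d
        obtain ⟨h11, h12, hopt1, -⟩ := hR a d (w + 1) h1 (by omega) hdn (by omega)
        obtain ⟨h21, h22, hopt2, -⟩ := hR b c (w + 1) (by omega) hbc' (by omega) (by omega)
        have e1 : C a d (w + 1) = (∑ m ∈ Finset.Icc a d, (p m : ℝ≥0∞)) +
            (C a (R a d (w + 1) - 1) (w + 1) + C (R a d (w + 1)) d w) := by
          have := Ceq (p := p) hrec hR h1 (by omega : a < d) hdn (by omega : 1 ≤ w + 1)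
          rwa [Nat.add_sub_cancel] at this
        have e2 : C b c (w + 1) = (∑ m ∈ Finset.Icc b c, (p m : ℝ≥0∞)) +
            (C b (R b c (w + 1) - 1) (w + 1) + C (R b c (w + 1)) c w) := by
          have := Ceq (p := p) hrec hR (by omega : 1 ≤ b) hbc' (by omega : c ≤ n)
            (by omega : 1 ≤ w + 1)
          rwa [Nat.add_sub_cancel] at this
        set r1 := R a d (w + 1) with hr1def
        set r2 := R b c (w + 1) with hr2def
        have hsum := sumQE p h1 hab hbc hcd
        by_cases h12' : r1 ≤ r2
        · have u1 : C a c (w + 1) ≤ (∑ m ∈ Finset.Icc a c, (p m : ℝ≥0∞)) +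
              (C a (r1 - 1) (w + 1) + C r1 c w) :=
            Cle (p := p) hrec h1 (by omega) (by omega) (by omega) h11 (by omega)
          have u2 : C b d (w + 1) ≤ (∑ m ∈ Finset.Icc b d, (p m : ℝ≥0∞)) +
              (C b (r2 - 1) (w + 1) + C r2 d w) :=
            Cle (p := p) hrec (by omega) (by omega) hdn (by omega) h21 (by omega)
          have q : C r1 c w + C r2 d w ≤ C r1 d w + C r2 c w :=
            ihw d r1 r2 c d (by omega) h12' h22 hcd hdn (by omega)
          calc C a c (w + 1) + C b d (w + 1)
              ≤ ((∑ m ∈ Finset.Icc a c, (p m : ℝ≥0∞)) +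
                  (C a (r1 - 1) (w + 1) + C r1 c w)) +
                ((∑ m ∈ Finset.Icc b d, (p m : ℝ≥0∞)) +
                  (C b (r2 - 1) (w + 1) + C r2 d w)) := add_le_add u1 u2
            _ = ((∑ m ∈ Finset.Icc a c, (p m : ℝ≥0∞)) +
                  (∑ m ∈ Finset.Icc b d, (p m : ℝ≥0∞)) +
                  (C a (r1 - 1) (w + 1) + C b (r2 - 1) (w + 1))) +
                (C r1 c w + C r2 d w) := by ring
            _ ≤ ((∑ m ∈ Finset.Icc a d, (p m : ℝ≥0∞)) +
                  (∑ m ∈ Finset.Icc b c, (p m : ℝ≥0∞)) +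
                  (C a (r1 - 1) (w + 1) + C b (r2 - 1) (w + 1))) +
                (C r1 d w + C r2 c w) := by
                rw [hsum]; exact add_le_add_right q _
            _ = ((∑ m ∈ Finset.Icc a d, (p m : ℝ≥0∞)) +
                  (C a (r1 - 1) (w + 1) + C r1 d w)) +
                ((∑ m ∈ Finset.Icc b c, (p m : ℝ≥0∞)) +
                  (C b (r2 - 1) (w + 1) + C r2 c w)) := by ring
            _ = C a d (w + 1) + C b c (w + 1) := by rw [e1, e2]
        · push_neg at h12'
          have u1 : C a c (w + 1) ≤ (∑ m ∈ Finset.Icc a c, (p m : ℝ≥0∞)) +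
              (C a (r2 - 1) (w + 1) + C r2 c w) :=
            Cle (p := p) hrec h1 (by omega) (by omega) (by omega) (by omega) h22
          have u2 : C b d (w + 1) ≤ (∑ m ∈ Finset.Icc b d, (p m : ℝ≥0∞)) +
              (C b (r1 - 1) (w + 1) + C r1 d w) :=
            Cle (p := p) hrec (by omega) (by omega) hdn (by omega) (by omega) h12
          have q : C a (r2 - 1) (w + 1) + C b (r1 - 1) (w + 1) ≤
              C a (r1 - 1) (w + 1) + C b (r2 - 1) (w + 1) :=
            ihs a b (r2 - 1) (r1 - 1) h1 hab (by omega) (by omega) (by omega) (by omega)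
          calc C a c (w + 1) + C b d (w + 1)
              ≤ ((∑ m ∈ Finset.Icc a c, (p m : ℝ≥0∞)) +
                  (C a (r2 - 1) (w + 1) + C r2 c w)) +
                ((∑ m ∈ Finset.Icc b d, (p m : ℝ≥0∞)) +
                  (C b (r1 - 1) (w + 1) + C r1 d w)) := add_le_add u1 u2
            _ = ((∑ m ∈ Finset.Icc a c, (p m : ℝ≥0∞)) +
                  (∑ m ∈ Finset.Icc b d, (p m : ℝ≥0∞)) +
                  (C r1 d w + C r2 c w)) +
                (C a (r2 - 1) (w + 1) + C b (r1 - 1) (w + 1)) := by ring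
            _ ≤ ((∑ m ∈ Finset.Icc a d, (p m : ℝ≥0∞)) +
                  (∑ m ∈ Finset.Icc b c, (p m : ℝ≥0∞)) +
                  (C r1 d w + C r2 c w)) +
                (C a (r1 - 1) (w + 1) + C b (r2 - 1) (w + 1)) := by
                rw [hsum]; exact add_le_add_right q _
            _ = ((∑ m ∈ Finset.Icc a d, (p m : ℝ≥0∞)) +
                  (C a (r1 - 1) (w + 1) + C r1 d w)) +
                ((∑ m ∈ Finset.Icc b c, (p m : ℝ≥0∞)) +
                  (C b (r2 - 1) (w + 1) + C r2 c w)) := by ring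
            _ = C a d (w + 1) + C b c (w + 1) := by rw [e1, e2]

/-- For `w = 1` the optimal split of a nontrivial interval is the right endpoint. -/
lemma Rtop
    (hdiag : ∀ i w : ℕ, 1 ≤ i → i ≤ n → C i i w = 0)
    (hzero : ∀ i j : ℕ, 1 ≤ i → i < j → j ≤ n → C i j 0 = ⊤)
    (hrec : ∀ i j w : ℕ, 1 ≤ i → i < j → j ≤ n → 1 ≤ w →
      C i j w = (∑ k ∈ Finset.Icc i j, (p k : ℝ≥0∞)) +
        ⨅ k ∈ Finset.Ioc i j, (C i (k - 1) w + C k j (w - 1)))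
    (hR : ∀ i j w : ℕ, 1 ≤ i → i < j → j ≤ n → 1 ≤ w →
      i < R i j w ∧ R i j w ≤ j ∧
      (∀ k : ℕ, i < k → k ≤ j →
        C i (R i j w - 1) w + C (R i j w) j (w - 1) ≤ C i (k - 1) w + C k j (w - 1)) ∧
      (∀ k : ℕ, i < k → k ≤ j →
        C i (k - 1) w + C k j (w - 1) ≤ C i (R i j w - 1) w + C (R i j w) j (w - 1) →
        k ≤ R i j w))
    {i j : ℕ} (hi : 1 ≤ i) (hij : i < j) (hjn : j ≤ n) : R i j 1 = j := by
  obtain ⟨h1, h2, hopt, -⟩ := hR i j 1 hi hij hjn le_rfl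
  by_contra h
  have hlt : R i j 1 < j := lt_of_le_of_ne h2 h
  have hle := hopt j hij le_rfl
  rw [show (1 : ℕ) - 1 = 0 from rfl, hdiag j 0 (by omega) hjn, add_zero,
    hzero (R i j 1) j (by omega) hlt hjn, add_top] at hle
  have hfin : C i (j - 1) 1 ≠ ⊤ :=
    Cfin hdiag hrec n i (j - 1) 1 hi (by omega) (by omega) le_rfl (by omega)
  exact hfin (top_le_iff.1 hle)

end WithC

end KnuthYaoAux

open KnuthYaoAux

/-- **Theorem 1 (monotonicity of the optimal split points).** For every `w ≥ 1` and all
`1 ≤ i ≤ j ≤ n - 1`, it holds that `R(i,j,w) ≤ R(i,j+1,w) ≤ R(i+1,j+1,w)`, where for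
`i < j`, `R(i,j,w)` is the largest index `k` with `i < k ≤ j` achieving the minimum of
`C(i,k-1,w) + C(k,j,w-1)`, and `R(i,i,w) = i`.
Here `C(i,i,w) = 0`, `C(i,j,0) = ∞` for `i < j`, and for `i < j`, `w ≥ 1`,
`C(i,j,w) = (p_i + ⋯ + p_j) + min_{i < k ≤ j} (C(i,k-1,w) + C(k,j,w-1))`. -/
theorem monotonicity_of_roots
    (n : ℕ) (p : ℕ → ℝ≥0)
    (C : ℕ → ℕ → ℕ → ℝ≥0∞)
    (hdiag : ∀ i w : ℕ, 1 ≤ i → i ≤ n → C i i w = 0)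
    (hzero : ∀ i j : ℕ, 1 ≤ i → i < j → j ≤ n → C i j 0 = ⊤)
    (hrec : ∀ i j w : ℕ, 1 ≤ i → i < j → j ≤ n → 1 ≤ w →
      C i j w = (∑ k ∈ Finset.Icc i j, (p k : ℝ≥0∞)) +
        ⨅ k ∈ Finset.Ioc i j, (C i (k - 1) w + C k j (w - 1)))
    (R : ℕ → ℕ → ℕ → ℕ)
    (hRdiag : ∀ i w : ℕ, 1 ≤ i → i ≤ n → R i i w = i)
    (hR : ∀ i j w : ℕ, 1 ≤ i → i < j → j ≤ n → 1 ≤ w →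
      i < R i j w ∧ R i j w ≤ j ∧
      (∀ k : ℕ, i < k → k ≤ j →
        C i (R i j w - 1) w + C (R i j w) j (w - 1) ≤ C i (k - 1) w + C k j (w - 1)) ∧
      (∀ k : ℕ, i < k → k ≤ j →
        C i (k - 1) w + C k j (w - 1) ≤ C i (R i j w - 1) w + C (R i j w) j (w - 1) →
        k ≤ R i j w)) :
    ∀ w : ℕ, 1 ≤ w → ∀ i j : ℕ, 1 ≤ i → i ≤ j → j + 1 ≤ n →
      R i j w ≤ R i (j + 1) w ∧ R i (j + 1) w ≤ R (i + 1) (j + 1) w := by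
  intro w hw i j hi hij hjn
  constructor
  · -- R i j w ≤ R i (j+1) w
    rcases eq_or_lt_of_le hij with rfl | hij'
    · -- i = j
      rw [hRdiag i w hi (by omega)]
      have := (hR i (i + 1) w hi (by omega) hjn hw).1
      omega
    · -- i < j
      rcases eq_or_lt_of_le hw with hw1 | hw2
      · -- w = 1
        have h2 : R i j w ≤ j := (hR i j w hi hij' (by omega) hw).2.1
        have h3 : R i (j + 1) w = j + 1 := by
          rw [← hw1]
          exact Rtop hdiag hzero hrec hR hi (by omega) hjn
        omega
      · -- w ≥ 2
        obtain ⟨hA1, hA2, hAopt, -⟩ := hR i j w hi hij' (by omega) hw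
        obtain ⟨hB1, hB2, hBopt, hBmax⟩ := hR i (j + 1) w hi (by omega) hjn hw
        set r := R i j w with hr
        set r' := R i (j + 1) w with hr'
        by_cases hcmp : r ≤ r'
        · exact hcmp
        push_neg at hcmp
        have hq : C r' j (w - 1) + C r (j + 1) (w - 1) ≤
            C r' (j + 1) (w - 1) + C r j (w - 1) :=
          QI hdiag hzero hrec hR (w - 1) n r' r j (j + 1)
            (by omega) (by omega) hA2 (by omega) hjn (by omega)
        have ho : C i (r - 1) w + C r j (w - 1) ≤ C i (r' - 1) w + C r' j (w - 1) :=
          hAopt r' (by omega) (by omega)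
        have hsum := add_le_add ho hq
        have hfin : C r j (w - 1) + C r' j (w - 1) ≠ ⊤ := by
          refine ENNReal.add_ne_top.2 ⟨?_, ?_⟩
          · exact Cfin hdiag hrec n r j (w - 1) (by omega) hA2 (by omega) (by omega) (by omega)
          · exact Cfin hdiag hrec n r' j (w - 1) (by omega) (by omega) (by omega) (by omega)
              (by omega)
        have key : C i (r - 1) w + C r (j + 1) (w - 1) ≤
            C i (r' - 1) w + C r' (j + 1) (w - 1) := by
          have h' : (C r j (w - 1) + C r' j (w - 1)) +
              (C i (r - 1) w + C r (j + 1) (w - 1)) ≤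
              (C r j (w - 1) + C r' j (w - 1)) +
              (C i (r' - 1) w + C r' (j + 1) (w - 1)) := by
            calc (C r j (w - 1) + C r' j (w - 1)) +
                (C i (r - 1) w + C r (j + 1) (w - 1))
                = (C i (r - 1) w + C r j (w - 1)) +
                  (C r' j (w - 1) + C r (j + 1) (w - 1)) := by ring
              _ ≤ (C i (r' - 1) w + C r' j (w - 1)) +
                  (C r' (j + 1) (w - 1) + C r j (w - 1)) := hsum
              _ = (C r j (w - 1) + C r' j (w - 1)) +
                  (C i (r' - 1) w + C r' (j + 1) (w - 1)) := by ring
          exact (ENNReal.add_le_add_iff_left hfin).1 h'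
        exact hBmax r (by omega) (by omega) key
  · -- R i (j+1) w ≤ R (i+1) (j+1) w
    rcases eq_or_lt_of_le hij with rfl | hij'
    · -- i = j
      rw [hRdiag (i + 1) w (by omega) hjn]
      have := (hR i (i + 1) w hi (by omega) hjn hw).2.1
      omega
    · -- i < j
      obtain ⟨hB1, hB2, hBopt, hBmax⟩ := hR i (j + 1) w hi (by omega) hjn hw
      obtain ⟨hC1, hC2, hCopt, hCmax⟩ := hR (i + 1) (j + 1) w (by omega) (by omega) hjn hw
      set r' := R i (j + 1) w with hr'
      set r'' := R (i + 1) (j + 1) w with hr''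
      by_cases hcmp : r' ≤ r''
      · exact hcmp
      push_neg at hcmp
      have hq : C i (r'' - 1) w + C (i + 1) (r' - 1) w ≤
          C i (r' - 1) w + C (i + 1) (r'' - 1) w :=
        QI hdiag hzero hrec hR w n i (i + 1) (r'' - 1) (r' - 1)
          hi (by omega) (by omega) (by omega) (by omega) (by omega)
      have ho : C i (r' - 1) w + C r' (j + 1) (w - 1) ≤
          C i (r'' - 1) w + C r'' (j + 1) (w - 1) :=
        hBopt r'' (by omega) (by omega)
      have hsum := add_le_add hq ho
      have hfin : C i (r'' - 1) w + C i (r' - 1) w ≠ ⊤ := by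
        refine ENNReal.add_ne_top.2 ⟨?_, ?_⟩
        · exact Cfin hdiag hrec n i (r'' - 1) w hi (by omega) (by omega) hw (by omega)
        · exact Cfin hdiag hrec n i (r' - 1) w hi (by omega) (by omega) hw (by omega)
      have key : C (i + 1) (r' - 1) w + C r' (j + 1) (w - 1) ≤
          C (i + 1) (r'' - 1) w + C r'' (j + 1) (w - 1) := by
        have h' : (C i (r'' - 1) w + C i (r' - 1) w) +
            (C (i + 1) (r' - 1) w + C r' (j + 1) (w - 1)) ≤
            (C i (r'' - 1) w + C i (r' - 1) w) +
            (C (i + 1) (r'' - 1) w + C r'' (j + 1) (w - 1)) := by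
          calc (C i (r'' - 1) w + C i (r' - 1) w) +
              (C (i + 1) (r' - 1) w + C r' (j + 1) (w - 1))
              = (C i (r'' - 1) w + C (i + 1) (r' - 1) w) +
                (C i (r' - 1) w + C r' (j + 1) (w - 1)) := by ring
            _ ≤ (C i (r' - 1) w + C (i + 1) (r'' - 1) w) +
                (C i (r'' - 1) w + C r'' (j + 1) (w - 1)) := hsum
            _ = (C i (r'' - 1) w + C i (r' - 1) w) +
                (C (i + 1) (r'' - 1) w + C r'' (j + 1) (w - 1)) := by ring
        exact (ENNReal.add_le_add_iff_left hfin).1 h'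
      exact hCmax r' (by omega) hB2 key
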